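/- Let B = {X ∈ ℝ³ : ‖X‖ < r} (r > 0) carry the quadratic response W(X,F) = f(‖X‖²) • (F Fᵀ − 1), and assume f : ℝ → ℝ is strictly monotone on [0,∞). Then two points X, Y ∈ B are materially isomorphic if and only if ‖X‖ = ‖Y‖. -/
import Mathlib


open Matrix

/-- `F ∈ GL(3,ℝ)` is a material isomorphism from `X` to `Y` for the
mechanical response `W`: `W (X, G * F) = W (Y, G)` for every `G ∈ GL(3,ℝ)`. -/
def IsMatIso {V : Type*} (W : EuclideanSpace ℝ (Fin 3) → GL (Fin 3) ℝ → V)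
    (X Y : EuclideanSpace ℝ (Fin 3)) (F : GL (Fin 3) ℝ) : Prop :=
  ∀ G : GL (Fin 3) ℝ, W X (G * F) = W Y G

/-- The quadratic mechanical response `W(X,F) = f(‖X‖²) • (F Fᵀ − 1)`. -/
noncomputable def Wq (f : ℝ → ℝ) (X : EuclideanSpace ℝ (Fin 3)) (F : GL (Fin 3) ℝ) :
    Matrix (Fin 3) (Fin 3) ℝ :=
  f (‖X‖ ^ 2) • ((F : Matrix (Fin 3) (Fin 3) ℝ) * (F : Matrix (Fin 3) (Fin 3) ℝ)ᵀ - 1)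

/-- The invertible matrix `2 • 1` in `GL(3,ℝ)`. -/
noncomputable def twoGL : GL (Fin 3) ℝ :=
  ⟨(2:ℝ) • 1, (2⁻¹:ℝ) • 1,
    by rw [smul_mul_smul_comm]; norm_num,
    by rw [smul_mul_smul_comm]; norm_num⟩

/-- If `f` is strictly monotone on `[0,∞)`, then two points of the ball are
materially isomorphic for the quadratic response iff they have the same norm. -/
theorem matIso_quadratic_strictMono (r : ℝ) (hr : 0 < r) (f : ℝ → ℝ)
    (hf : StrictMonoOn f (Set.Ici 0) ∨ StrictAntiOn f (Set.Ici 0))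
    (X Y : EuclideanSpace ℝ (Fin 3)) (hX : ‖X‖ < r) (hY : ‖Y‖ < r) :
    (∃ F : GL (Fin 3) ℝ, IsMatIso (Wq f) X Y F) ↔ ‖X‖ = ‖Y‖ := by
  constructor
  · rintro ⟨F, hF⟩
    set a := f (‖X‖ ^ 2) with ha
    set b := f (‖Y‖ ^ 2) with hb
    set M : Matrix (Fin 3) (Fin 3) ℝ := (F : Matrix (Fin 3) (Fin 3) ℝ) with hM
    have h1 := hF 1
    have h2 := hF twoGL
    simp only [Wq, one_mul, Units.val_mul, Units.val_one, Matrix.transpose_one,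
      Matrix.one_mul, sub_self, smul_zero] at h1 h2
    -- h1 : a • (M * Mᵀ - 1) = 0
    have h2' : a • ((4:ℝ) • (M * Mᵀ) - 1) = b • ((4:ℝ) • (1 : Matrix (Fin 3) (Fin 3) ℝ) - 1) := by
      have e1 : ((twoGL : Matrix (Fin 3) (Fin 3) ℝ) * M) *
          ((twoGL : Matrix (Fin 3) (Fin 3) ℝ) * M)ᵀ = (4:ℝ) • (M * Mᵀ) := by
        show (((2:ℝ) • 1) * M) * (((2:ℝ) • 1) * M)ᵀ = (4:ℝ) • (M * Mᵀ)
        rw [Matrix.smul_mul, Matrix.one_mul, Matrix.transpose_smul,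
          Matrix.smul_mul, Matrix.mul_smul, smul_smul]
        norm_num
      have e2 : (twoGL : Matrix (Fin 3) (Fin 3) ℝ) *
          (twoGL : Matrix (Fin 3) (Fin 3) ℝ)ᵀ = (4:ℝ) • (1 : Matrix (Fin 3) (Fin 3) ℝ) := by
        show (((2:ℝ) • 1) * ((2:ℝ) • (1 : Matrix (Fin 3) (Fin 3) ℝ))ᵀ) = _
        rw [Matrix.transpose_smul, Matrix.transpose_one, smul_mul_smul_comm, one_mul]
        norm_num
      rw [← e1, ← e2]
      exact h2
    have key : (3 * a) • (1 : Matrix (Fin 3) (Fin 3) ℝ) = (3 * b) • 1 := by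
      have lhs : a • ((4:ℝ) • (M * Mᵀ) - 1)
          = (4:ℝ) • (a • (M * Mᵀ - 1)) + (3 * a) • (1 : Matrix (Fin 3) (Fin 3) ℝ) := by
        module
      have rhs : b • ((4:ℝ) • (1 : Matrix (Fin 3) (Fin 3) ℝ) - 1)
          = (3 * b) • (1 : Matrix (Fin 3) (Fin 3) ℝ) := by
        module
      rw [lhs, h1, smul_zero, zero_add, rhs] at h2'
      exact h2'
    have hab : a = b := by
      have := congrArg (fun m : Matrix (Fin 3) (Fin 3) ℝ => m 0 0) key
      simp [Matrix.smul_apply, Matrix.one_apply] at this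
      linarith
    have hsq : ‖X‖ ^ 2 = ‖Y‖ ^ 2 := by
      rcases hf with h | h
      · exact h.injOn (Set.mem_Ici.2 (sq_nonneg _)) (Set.mem_Ici.2 (sq_nonneg _)) hab
      · exact h.injOn (Set.mem_Ici.2 (sq_nonneg _)) (Set.mem_Ici.2 (sq_nonneg _)) hab
    have := congrArg Real.sqrt hsq
    simpa [Real.sqrt_sq (norm_nonneg _)] using this
  · intro h
    refine ⟨1, fun G => ?_⟩
    simp [Wq, h]
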